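/- Let n ∈ ℕ, α ∈ (0,1], and μ, ν, c ∈ ℝ with c > ν > 0 and c + n not a nonpositive integer. For x > 0 with |x^α| < 1, ₂F₁(μ, ν; c+n; x^α) = ((c)_n/(c−ν)_n) Σ_{k=0}^{n} (−1)^k C(n,k) ((ν)_k/(c)_k) ₂F₁(μ, ν+k; c+k; x^α). -/

import Mathlib

set_option maxHeartbeats 1000000

open scoped Real BigOperators

noncomputable def poch (b : ℝ) (n : ℕ) : ℝ := (ascPochhammer ℝ n).eval b

noncomputable def F21 (μ ν c z : ℝ) : ℝ :=
  ∑' n : ℕ, poch μ n * poch ν n / (poch c n * (n.factorial : ℝ)) * z ^ n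

noncomputable def confD (α : ℝ) (f : ℝ → ℝ) : ℝ → ℝ :=
  fun x => x ^ (1 - α) * deriv f x

noncomputable def theta (α : ℝ) (f : ℝ → ℝ) : ℝ → ℝ :=
  fun x => (1 / α) * x ^ α * confD α f x

lemma poch_zero (b : ℝ) : poch b 0 = 1 := by simp [poch]
lemma poch_succ (b : ℝ) (n : ℕ) : poch b (n+1) = poch b n * (b + n) :=
  ascPochhammer_succ_eval n b
lemma poch_succ_left (b : ℝ) (n : ℕ) : poch b (n+1) = b * poch (b+1) n := by
  simp [poch, ascPochhammer_succ_left, Polynomial.eval_comp]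
lemma poch_add (b : ℝ) (m k : ℕ) : poch b (m+k) = poch b m * poch (b+m) k := by
  have := congrArg (Polynomial.eval b) (ascPochhammer_mul (S := ℝ) m k)
  simpa [poch, Polynomial.eval_comp] using this.symm
lemma poch_pos {b : ℝ} (hb : 0 < b) (n : ℕ) : 0 < poch b n := ascPochhammer_pos n b hb
lemma poch_ne_zero {b : ℝ} (hb : 0 < b) (n : ℕ) : poch b n ≠ 0 := (poch_pos hb n).ne'

lemma cv_poly (n : ℕ) : ∀ a b : ℝ,
    ∑ k ∈ Finset.range (n+1), (-1:ℝ)^k * (n.choose k : ℝ) * poch a k * poch (b+k) (n-k)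
      = poch (b-a) n := by
  induction n with
  | zero => intro a b; simp [poch_zero]
  | succ n ih =>
    intro a b
    set t : ℕ → ℝ := fun k => (-1:ℝ)^k * (n.choose k : ℝ) * poch a k * poch (b+k) (n+1-k)
      with ht
    have hsum2 : ∑ k ∈ Finset.range (n+1), t k = (b+n) * poch (b-a) n := by
      rw [← ih a b, Finset.mul_sum]
      refine Finset.sum_congr rfl fun k hk => ?_
      have hk' : k ≤ n := Nat.lt_succ_iff.mp (Finset.mem_range.mp hk)
      have h1 : n+1-k = (n-k)+1 := by omega
      have h2 : (b:ℝ) + k + ((n-k : ℕ) : ℝ) = b + n := by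
        rw [Nat.cast_sub hk']; ring
      rw [ht]; simp only
      rw [h1, poch_succ, h2]
      ring
    have hfull : ∑ k ∈ Finset.range (n+2), t k = (b+n) * poch (b-a) n := by
      rw [Finset.sum_range_succ, hsum2]
      have h0 : t (n+1) = 0 := by simp [ht, Nat.choose_succ_self]
      rw [h0, add_zero]
    have hshift : ∑ j ∈ Finset.range (n+1), t (j+1) = (b+n) * poch (b-a) n - t 0 := by
      have h := Finset.sum_range_succ' t (n+1)
      rw [hfull] at h
      linarith
    rw [Finset.sum_range_succ']
    have hsplit : ∀ j ∈ Finset.range (n+1),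
        (-1:ℝ)^(j+1) * ((n+1).choose (j+1) : ℝ) * poch a (j+1) * poch (b+((j+1 : ℕ):ℝ)) (n+1-(j+1))
          = -(a * ((-1:ℝ)^j * (n.choose j : ℝ) * poch (a+1) j * poch (b+1+(j:ℝ)) (n-j)))
            + t (j+1) := by
      intro j hj
      have h1 : (n+1).choose (j+1) = n.choose j + n.choose (j+1) := Nat.choose_succ_succ n j
      have h2 : (n+1) - (j+1) = n - j := by omega
      have h3 : (b:ℝ) + ((j+1 : ℕ):ℝ) = b + 1 + (j:ℝ) := by push_cast; ring
      rw [ht]; simp only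
      rw [h1, h2, h3, poch_succ_left]
      push_cast
      ring
    rw [Finset.sum_congr rfl hsplit, Finset.sum_add_distrib, hshift]
    have hT2 : ∑ j ∈ Finset.range (n+1),
        -(a * ((-1:ℝ)^j * (n.choose j : ℝ) * poch (a+1) j * poch (b+1+(j:ℝ)) (n-j)))
        = -(a * poch (b-a) n) := by
      have hS : ∑ j ∈ Finset.range (n+1),
          (-1:ℝ)^j * (n.choose j : ℝ) * poch (a+1) j * poch (b+1+(j:ℝ)) (n-j)
          = poch (b-a) n := by
        have h := ih (a+1) (b+1)
        rw [show ((b:ℝ)+1)-(a+1) = b - a by ring] at h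
        rw [← h]
      rw [← hS, Finset.mul_sum, ← Finset.sum_neg_distrib]
    rw [hT2]
    have ht0 : t 0 = poch b (n+1) := by simp [ht, poch_zero]
    have hb0 : (-1:ℝ)^0 * ((n+1).choose 0 : ℝ) * poch a 0 * poch (b+((0:ℕ):ℝ)) (n+1-0) = poch b (n+1) := by
      simp [poch_zero]
    rw [ht0, hb0, poch_succ (b-a) n]
    ring

lemma cv_div (n : ℕ) (a b : ℝ) (hb : 0 < b) :
    ∑ k ∈ Finset.range (n+1), (-1:ℝ)^k * (n.choose k : ℝ) * (poch a k / poch b k)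
      = poch (b-a) n / poch b n := by
  rw [eq_div_iff (poch_ne_zero hb n), ← cv_poly n a b, Finset.sum_mul]
  refine Finset.sum_congr rfl fun k hk => ?_
  have hk' : k ≤ n := Nat.lt_succ_iff.mp (Finset.mem_range.mp hk)
  have hbn : poch b n = poch b k * poch (b+k) (n-k) := by
    rw [← poch_add]
    congr 1
    omega
  rw [hbn]
  have h1 : poch b k ≠ 0 := poch_ne_zero hb k
  field_simp

open Filter Topology

lemma ratio_tendsto (a b : ℝ) : Tendsto (fun m : ℕ => (a + m) / (b + m)) atTop (𝓝 1) := by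
  have hb : Tendsto (fun m : ℕ => b + (m:ℝ)) atTop atTop :=
    tendsto_atTop_add_const_left _ b tendsto_natCast_atTop_atTop
  have hinv : Tendsto (fun m : ℕ => (b + (m:ℝ))⁻¹) atTop (𝓝 0) := hb.inv_tendsto_atTop
  have h1 : Tendsto (fun m : ℕ => 1 + (a - b) * (b + (m:ℝ))⁻¹) atTop (𝓝 (1 + (a-b) * 0)) :=
    tendsto_const_nhds.add (tendsto_const_nhds.mul hinv)
  rw [mul_zero, add_zero] at h1
  refine h1.congr' ?_
  filter_upwards [hb.eventually_gt_atTop 0] with m hm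
  field_simp
  ring

lemma F21_summable (μ ν c z : ℝ) (hc : 0 < c) (hz : |z| < 1) :
    Summable (fun m : ℕ => poch μ m * poch ν m / (poch c m * (m.factorial : ℝ)) * z ^ m) := by
  set f : ℕ → ℝ := fun m => poch μ m * poch ν m / (poch c m * (m.factorial : ℝ)) * z ^ m with hf
  set r : ℝ := (1 + |z|) / 2 with hr
  have hr1 : r < 1 := by rw [hr]; linarith
  have hzr : |z| < r := by rw [hr]; linarith
  refine summable_of_ratio_norm_eventually_le hr1 ?_
  have hq : Tendsto (fun m : ℕ => |(μ + m) * (ν + m) * z / ((c + m) * (1 + m))|) atTop (𝓝 |z|) := by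
    have h1 : Tendsto (fun m : ℕ => ((μ + m)/(1 + m)) * ((ν + m)/(c + m)) * z) atTop
        (𝓝 (1 * 1 * z)) := ((ratio_tendsto μ 1).mul (ratio_tendsto ν c)).mul tendsto_const_nhds
    rw [one_mul, one_mul] at h1
    have h2 := h1.abs
    refine h2.congr' (Filter.Eventually.of_forall fun m => ?_)
    congr 1
    rw [div_mul_div_comm, div_mul_eq_mul_div, mul_comm (1+(m:ℝ)) (c+(m:ℝ))]
  filter_upwards [hq.eventually_lt_const hzr] with m hm
  have hfc : poch c m ≠ 0 := poch_ne_zero hc m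
  have hfc1 : c + (m:ℝ) ≠ 0 := by positivity
  have hm1 : (1:ℝ) + m ≠ 0 := by positivity
  have hfac : ((m.factorial : ℝ)) ≠ 0 := by positivity
  have key : f (m+1) = f m * ((μ + m) * (ν + m) * z / ((c + m) * (1 + m))) := by
    rw [hf]; simp only
    rw [poch_succ, poch_succ, poch_succ, Nat.factorial_succ]
    push_cast
    field_simp
    ring
  rw [key]
  rw [Real.norm_eq_abs, Real.norm_eq_abs, abs_mul]
  have : |f m| * |(μ + ↑m) * (ν + ↑m) * z / ((c + ↑m) * (1 + ↑m))| ≤ |f m| * r :=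
    mul_le_mul_of_nonneg_left hm.le (abs_nonneg _)
  linarith [this]

lemma coeff_id (n m : ℕ) (μ ν c z : ℝ) (hν : 0 < ν) (hcν : ν < c) :
    poch μ m * poch ν m / (poch (c + (n:ℝ)) m * (m.factorial : ℝ)) * z ^ m
      = poch c n / poch (c - ν) n *
        ∑ k ∈ Finset.range (n+1), (-1:ℝ)^k * (n.choose k : ℝ) * (poch ν k / poch c k)
          * (poch μ m * poch (ν + (k:ℝ)) m / (poch (c + (k:ℝ)) m * (m.factorial : ℝ)) * z ^ m) := by
  have hc : 0 < c := hν.trans hcν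
  have hcm : (0:ℝ) < c + m := by positivity
  have hA : ∀ k, poch ν k * poch (ν + (k:ℝ)) m * (poch c m * poch (c + (m:ℝ)) k)
      = poch ν m * poch (ν + (m:ℝ)) k * (poch c k * poch (c + (k:ℝ)) m) := by
    intro k
    have h1 : poch ν k * poch (ν + (k:ℝ)) m = poch ν m * poch (ν + (m:ℝ)) k := by
      rw [← poch_add, ← poch_add, Nat.add_comm]
    have h2 : poch c k * poch (c + (k:ℝ)) m = poch c m * poch (c + (m:ℝ)) k := by
      rw [← poch_add, ← poch_add, Nat.add_comm]
    rw [h1, h2]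
  have hterm : ∀ k ∈ Finset.range (n+1),
      (-1:ℝ)^k * (n.choose k : ℝ) * (poch ν k / poch c k)
        * (poch μ m * poch (ν + (k:ℝ)) m / (poch (c + (k:ℝ)) m * (m.factorial : ℝ)) * z ^ m)
      = (poch μ m * poch ν m / (poch c m * (m.factorial : ℝ)) * z ^ m)
        * ((-1:ℝ)^k * (n.choose k : ℝ) * (poch (ν + (m:ℝ)) k / poch (c + (m:ℝ)) k)) := by
    intro k hk
    have e1 : poch c k ≠ 0 := poch_ne_zero hc k
    have e2 : poch (c + (k:ℝ)) m ≠ 0 := poch_ne_zero (by positivity) m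
    have e3 : poch c m ≠ 0 := poch_ne_zero hc m
    have e4 : poch (c + (m:ℝ)) k ≠ 0 := poch_ne_zero hcm k
    have e5 : ((m.factorial : ℝ)) ≠ 0 := by positivity
    field_simp
    linear_combination ((n.choose k : ℝ) * poch μ m * z ^ m) * hA k
  rw [Finset.sum_congr rfl hterm, ← Finset.mul_sum]
  have hcv := cv_div n (ν + (m:ℝ)) (c + (m:ℝ)) hcm
  rw [show (c + (m:ℝ)) - (ν + (m:ℝ)) = c - ν by ring] at hcv
  rw [hcv]
  have hdd : poch c m * poch (c + (m:ℝ)) n = poch c n * poch (c + (n:ℝ)) m := by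
    rw [← poch_add, ← poch_add, Nat.add_comm]
  have e1 : poch (c + (n:ℝ)) m ≠ 0 := poch_ne_zero (by positivity) m
  have e2 : poch (c - ν) n ≠ 0 := poch_ne_zero (by linarith) n
  have e3 : poch c m ≠ 0 := poch_ne_zero hc m
  have e4 : poch (c + (m:ℝ)) n ≠ 0 := poch_ne_zero hcm n
  have e5 : ((m.factorial : ℝ)) ≠ 0 := by positivity
  field_simp
  linear_combination (poch μ m * poch ν m * z ^ m) * hdd

theorem stmt18 (n : ℕ) (α : ℝ) (hα : α ∈ Set.Ioc (0:ℝ) 1) (μ ν c : ℝ)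
    (hν : 0 < ν) (hcν : ν < c) (hc : ∀ k : ℕ, c + (n : ℝ) ≠ -(k : ℝ))
    (x : ℝ) (hx : 0 < x) (hx1 : |x ^ α| < 1) :
    F21 μ ν (c + n) (x ^ α)
      = (poch c n / poch (c - ν) n)
        * ∑ k ∈ Finset.range (n + 1),
            (-1 : ℝ) ^ k * (n.choose k : ℝ) * (poch ν k / poch c k)
              * F21 μ (ν + k) (c + k) (x ^ α) := by
  have hc0 : 0 < c := hν.trans hcν
  set z := x ^ α with hz
  have hsummable : ∀ k ∈ Finset.range (n+1), Summable (fun m : ℕ =>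
      (-1:ℝ)^k * (n.choose k : ℝ) * (poch ν k / poch c k)
        * (poch μ m * poch (ν + (k:ℝ)) m / (poch (c + (k:ℝ)) m * (m.factorial : ℝ)) * z ^ m)) := by
    intro k hk
    exact (F21_summable μ (ν + k) (c + k) z (by positivity) hx1).mul_left _
  calc F21 μ ν (c + n) z
      = ∑' m : ℕ, (poch c n / poch (c - ν) n *
          ∑ k ∈ Finset.range (n+1), (-1:ℝ)^k * (n.choose k : ℝ) * (poch ν k / poch c k)
            * (poch μ m * poch (ν + (k:ℝ)) m / (poch (c + (k:ℝ)) m * (m.factorial : ℝ)) * z ^ m)) :=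
        tsum_congr fun m => coeff_id n m μ ν c z hν hcν
    _ = poch c n / poch (c - ν) n * ∑' m : ℕ,
          ∑ k ∈ Finset.range (n+1), (-1:ℝ)^k * (n.choose k : ℝ) * (poch ν k / poch c k)
            * (poch μ m * poch (ν + (k:ℝ)) m / (poch (c + (k:ℝ)) m * (m.factorial : ℝ)) * z ^ m) :=
        tsum_mul_left
    _ = poch c n / poch (c - ν) n *
          ∑ k ∈ Finset.range (n+1), ∑' m : ℕ, (-1:ℝ)^k * (n.choose k : ℝ) * (poch ν k / poch c k)
            * (poch μ m * poch (ν + (k:ℝ)) m / (poch (c + (k:ℝ)) m * (m.factorial : ℝ)) * z ^ m) := by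
        rw [Summable.tsum_finsetSum hsummable]
    _ = (poch c n / poch (c - ν) n)
        * ∑ k ∈ Finset.range (n + 1),
            (-1 : ℝ) ^ k * (n.choose k : ℝ) * (poch ν k / poch c k)
              * F21 μ (ν + k) (c + k) z := by
        congr 1
        exact Finset.sum_congr rfl fun k hk => tsum_mul_left
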